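/- Let b ∈ ℝ⟦s,λ⟧ be defined as follows: with Tutte's series τ, set r := s·(1+λs)^{−1} + τ(λ), let g ∈ ℝ⟦s,λ⟧ be the unique formal power series with constant coefficient 1 satisfying g² = (1+r)² − 4s, and set b := s + (1+λs)·g. Then b is of degree ≤ 0, i.e. every monomial sⁱλʲ occurring in b with nonzero coefficient satisfies i ≤ j. -/

import Mathlib

/- We realize `ℝ⟦s,λ⟧` as the iterated power series ring `(ℝ⟦s⟧)⟦λ⟧`:
the inner variable is `s` and the outer variable is `λ`. -/

/-- The variable `s` in `(ℝ⟦s⟧)⟦λ⟧`. -/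
noncomputable def sVar : PowerSeries (PowerSeries ℝ) :=
  PowerSeries.C (R := PowerSeries ℝ) PowerSeries.X

/-- The variable `λ` in `(ℝ⟦s⟧)⟦λ⟧`. -/
noncomputable def lVar : PowerSeries (PowerSeries ℝ) :=
  PowerSeries.X

/-- Tutte's series `τ(λ) = Σ_{i≥1} [2·(4i+1)! / ((i+1)!·(3i+2)!)]·λⁱ`,
viewed in `(ℝ⟦s⟧)⟦λ⟧`. -/
noncomputable def tutteSeries : PowerSeries (PowerSeries ℝ) :=
  PowerSeries.mk fun i =>
    if i = 0 then 0
    else PowerSeries.C (R := ℝ)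
      (2 * (Nat.factorial (4 * i + 1) : ℝ) /
        ((Nat.factorial (i + 1) : ℝ) * (Nat.factorial (3 * i + 2) : ℝ)))

open PowerSeries

namespace TutteAux

noncomputable section

abbrev B := PowerSeries ℝ

/-- Coefficients of the solution `θ` of `θ = X + 3θ² - 3θ³ + θ⁴`. -/
noncomputable def thc : ℕ → ℝ
  | 0 => 0
  | n+1 =>
      PowerSeries.coeff (R := ℝ) (n+1)
        (X + 3*(PowerSeries.mk fun k => if h : k ≤ n then thc k else 0)^2
          - 3*(PowerSeries.mk fun k => if h : k ≤ n then thc k else 0)^3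
          + (PowerSeries.mk fun k => if h : k ≤ n then thc k else 0)^4)
  decreasing_by all_goals omega

noncomputable def th : B := PowerSeries.mk thc

lemma th_const : constantCoeff (R := ℝ) th = 0 := by
  rw [← coeff_zero_eq_constantCoeff_apply]
  simp [th, thc]

/-- products of positive-order series that agree up to `n` agree up to `n+1`. -/
lemma agree_mul {f g f' g' : B} {n : ℕ}
    (hf0 : constantCoeff (R := ℝ) f = 0) (hg0 : constantCoeff (R := ℝ) g = 0)
    (hf0' : constantCoeff (R := ℝ) f' = 0) (hg0' : constantCoeff (R := ℝ) g' = 0)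
    (h : ∀ k ≤ n, coeff (R := ℝ) k f = coeff (R := ℝ) k g)
    (h' : ∀ k ≤ n, coeff (R := ℝ) k f' = coeff (R := ℝ) k g') :
    ∀ k ≤ n+1, coeff (R := ℝ) k (f*f') = coeff (R := ℝ) k (g*g') := by
  intro k hk
  rw [coeff_mul, coeff_mul]
  refine Finset.sum_congr rfl ?_
  rintro ⟨a, c⟩ hm
  rw [Finset.HasAntidiagonal.mem_antidiagonal] at hm
  by_cases ha : a = 0
  · subst ha
    simp only [coeff_zero_eq_constantCoeff_apply, hf0, hg0, zero_mul]
  · by_cases hc0 : c = 0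
    · subst hc0
      simp only [coeff_zero_eq_constantCoeff_apply, hf0', hg0', mul_zero]
    · have hc : c ≤ n := by omega
      have haa : a ≤ n := by omega
      rw [h a haa, h' c hc]

end

end TutteAux

namespace Stage1

noncomputable def prev (n : ℕ) : TutteAux.B :=
  PowerSeries.mk fun k => if k ≤ n then TutteAux.thc k else 0

lemma prev_const (n : ℕ) : PowerSeries.constantCoeff (R := ℝ) (prev n) = 0 := by
  rw [← PowerSeries.coeff_zero_eq_constantCoeff_apply]
  simp [prev, TutteAux.thc]

lemma prev_agree (n : ℕ) : ∀ k ≤ n,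
    PowerSeries.coeff (R := ℝ) k (prev n) = PowerSeries.coeff (R := ℝ) k TutteAux.th := by
  intro k hk
  simp [prev, TutteAux.th, hk]

open PowerSeries TutteAux in
lemma th_eq : TutteAux.th = X + 3*TutteAux.th^2 - 3*TutteAux.th^3 + TutteAux.th^4 := by
  ext n
  match n with
  | 0 =>
    have h0 : constantCoeff (R := ℝ) th = 0 := th_const
    simp only [coeff_zero_eq_constantCoeff_apply, map_add, map_sub, map_mul, map_pow,
      constantCoeff_X, h0]
    norm_num
  | n+1 =>
    have hsq := agree_mul (f := prev n) (g := th) (f' := prev n) (g' := th)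
      (prev_const n) th_const (prev_const n) th_const (prev_agree n) (prev_agree n)
    have hsq' : ∀ k ≤ n, coeff (R := ℝ) k ((prev n)^2) = coeff (R := ℝ) k (th^2) := fun k hk =>
      by rw [pow_two, pow_two]; exact hsq k (by omega)
    have hcb := agree_mul (f := prev n) (g := th) (f' := (prev n)^2) (g' := th^2)
      (prev_const n) th_const (by rw [map_pow, prev_const]; norm_num)
      (by rw [map_pow, th_const]; norm_num) (prev_agree n) hsq'
    have hcb' : ∀ k ≤ n, coeff (R := ℝ) k ((prev n)^3) = coeff (R := ℝ) k (th^3) := fun k hk =>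
      by rw [(by ring : (prev n)^3 = prev n * (prev n)^2), (by ring : th^3 = th * th^2)]; exact hcb k (by omega)
    have hq := agree_mul (f := prev n) (g := th) (f' := (prev n)^3) (g' := th^3)
      (prev_const n) th_const (by rw [map_pow, prev_const]; norm_num)
      (by rw [map_pow, th_const]; norm_num) (prev_agree n) hcb'
    have e2 : coeff (R := ℝ) (n+1) ((prev n)^2) = coeff (R := ℝ) (n+1) (th^2) := by
      rw [pow_two, pow_two]; exact hsq (n+1) le_rfl
    have e3 : coeff (R := ℝ) (n+1) ((prev n)^3) = coeff (R := ℝ) (n+1) (th^3) := by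
      rw [(by ring : (prev n)^3 = prev n * (prev n)^2), (by ring : th^3 = th * th^2)]
      exact hcb (n+1) le_rfl
    have e4 : coeff (R := ℝ) (n+1) ((prev n)^4) = coeff (R := ℝ) (n+1) (th^4) := by
      rw [(by ring : (prev n)^4 = prev n * (prev n)^3), (by ring : th^4 = th * th^3)]
      exact hq (n+1) le_rfl
    calc coeff (R := ℝ) (n+1) th
        = coeff (R := ℝ) (n+1) (X + 3*(prev n)^2 - 3*(prev n)^3 + (prev n)^4) := by
          rw [th, coeff_mk]
          show thc (n+1) = _
          rw [thc]
          rfl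
      _ = coeff (R := ℝ) (n+1) (X + 3*th^2 - 3*th^3 + th^4) := by
          simp only [map_add, map_sub]
          rw [show (3:B)*(prev n)^2 = C (R := ℝ) 3 * (prev n)^2 by simp [map_ofNat],
              show (3:B)*th^2 = C (R := ℝ) 3 * th^2 by simp [map_ofNat],
              show (3:B)*(prev n)^3 = C (R := ℝ) 3 * (prev n)^3 by simp [map_ofNat],
              show (3:B)*th^3 = C (R := ℝ) 3 * th^3 by simp [map_ofNat],
              coeff_C_mul, coeff_C_mul, coeff_C_mul, coeff_C_mul, e2, e3, e4]

open PowerSeries TutteAux in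
lemma hX : (X : B) = th * (1 - th)^3 := by
  linear_combination -th_eq

end Stage1

namespace TutteAux
noncomputable section
open PowerSeries

/-- The operator `λ·d/dλ` on coefficients: `coeff n ↦ n * coeff n`. -/
def Nop (F : B) : B := PowerSeries.mk fun n => (n : ℝ) * coeff (R := ℝ) n F

@[simp] lemma coeff_Nop (n : ℕ) (F : B) : coeff (R := ℝ) n (Nop F) = (n : ℝ) * coeff (R := ℝ) n F :=
  coeff_mk _ _

lemma Nop_add (F G : B) : Nop (F + G) = Nop F + Nop G := by
  ext n; simp [mul_add]

lemma Nop_mul (F G : B) : Nop (F * G) = Nop F * G + F * Nop G := by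
  ext n
  rw [coeff_Nop, map_add, coeff_mul, coeff_mul, coeff_mul, Finset.mul_sum, ← Finset.sum_add_distrib]
  refine Finset.sum_congr rfl ?_
  rintro ⟨a, c⟩ hm
  rw [Finset.HasAntidiagonal.mem_antidiagonal] at hm
  subst hm
  rw [coeff_Nop, coeff_Nop]
  push_cast
  ring

lemma Nop_one : Nop (1 : B) = 0 := by
  ext n
  rw [coeff_Nop, coeff_one]
  cases n <;> simp

lemma Nop_sub (F G : B) : Nop (F - G) = Nop F - Nop G := by
  ext n; simp [mul_sub]

lemma Nop_C (r : ℝ) : Nop (C (R := ℝ) r) = 0 := by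
  ext n
  rw [coeff_Nop, coeff_C]
  cases n <;> simp

@[simp] lemma Nop_ofNat (n : ℕ) [n.AtLeastTwo] : Nop (no_index (OfNat.ofNat n) : B) = 0 := by
  rw [← map_ofNat (C (R := ℝ)) n, Nop_C]

lemma Nop_X : Nop (X : B) = X := by
  ext n
  rw [coeff_Nop, coeff_X]
  rcases eq_or_ne n 1 with h | h <;> simp [h, coeff_X]

lemma Nop_pow (F : B) (m : ℕ) : Nop (F ^ m) = (m : B) * F ^ (m - 1) * Nop F := by
  induction m with
  | zero => simp [pow_zero, Nop_one]
  | succ k ih =>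
    rw [pow_succ, Nop_mul, ih]
    cases k with
    | zero => simp [Nop_one]
    | succ j =>
      push_cast
      rw [show F ^ (j+1) = F^j * F from pow_succ F j]
      ring

end
end TutteAux

namespace TutteAux
noncomputable section
open PowerSeries

lemma cancel {a b m : B} (hm : constantCoeff (R := ℝ) m ≠ 0) (h : (a - b) * m = 0) : a = b := by
  rcases mul_eq_zero.mp h with h' | h'
  · exact sub_eq_zero.mp h'
  · exact absurd (by rw [h', map_zero]) hm

lemma const_w : constantCoeff (R := ℝ) (1 - th) = 1 := by
  rw [map_sub, map_one, th_const, sub_zero]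

lemma const_v : constantCoeff (R := ℝ) (1 - 4*th) = 1 := by
  rw [map_sub, map_one, map_mul, th_const, mul_zero, sub_zero]

lemma hev : Nop th * (1 - 4*th) = th * (1 - th) := by
  have d := congrArg Nop Stage1.hX
  simp only [Nop_mul, Nop_pow, Nop_sub, Nop_one, Nop_X, Nop_ofNat, Nat.cast_ofNat] at d
  apply cancel (m := (1 - th)^2)
  · rw [map_pow, const_w, one_pow]; norm_num
  · linear_combination Stage1.hX - d

def uu : B := (1 - 3*th + th^2) * ((1 - th)⁻¹)^6

lemma hu : uu * (1 - th)^6 = 1 - 3*th + th^2 := by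
  have hinv : ((1 - th)⁻¹ * (1 - th)) = 1 :=
    PowerSeries.inv_mul_cancel _ (by rw [const_w]; norm_num)
  calc uu * (1 - th)^6 = (1 - 3*th + th^2) * ((1 - th)⁻¹ * (1 - th))^6 := by
        rw [uu, mul_pow]; ring
    _ = 1 - 3*th + th^2 := by rw [hinv, one_pow, mul_one]

lemma h1 : Nop uu * (1 - th)^6 * (1 - 4*th)^2
    = 3*th - 25*th^2 + 56*th^3 - 16*th^4 := by
  have d := congrArg Nop hu
  simp only [Nop_mul, Nop_pow, Nop_sub, Nop_add, Nop_one, Nop_ofNat, Nop_X, Nat.cast_ofNat] at d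
  linear_combination (1-4*th)^2 * d
    + (6*uu*(1-th)^5*(1-4*th) + (-3 + 2*th)*(1-4*th)) * hev
    + (6*th*(1-4*th)) * hu

lemma h2 : Nop (Nop uu) * (1 - th)^6 * (1 - 4*th)^4
    = 3*th - 23*th^2 - 16*th^3 + 480*th^4 - 1024*th^5 + 256*th^6 := by
  have d := congrArg Nop h1
  simp only [Nop_mul, Nop_pow, Nop_sub, Nop_add, Nop_one, Nop_ofNat, Nop_X, Nat.cast_ofNat] at d
  linear_combination (1-4*th)^2 * d
    + (6*(Nop uu)*(1-th)^5*(1-4*th)^3 + 8*(Nop uu)*(1-th)^6*(1-4*th)^2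
        + (3 - 50*th + 168*th^2 - 64*th^3)*(1-4*th)) * hev
    + (6*th*(1-4*th) + 8*th*(1-th)) * h1

lemma h3 : Nop (Nop (Nop uu)) * (1 - th)^6 * (1 - 4*th)^6
    = 3*th + 5*th^2 - 432*th^3 + 2544*th^4 - 3712*th^5 - 6912*th^6 + 18432*th^7 - 4096*th^8 := by
  have d := congrArg Nop h2
  simp only [Nop_mul, Nop_pow, Nop_sub, Nop_add, Nop_one, Nop_ofNat, Nop_X, Nat.cast_ofNat] at d
  linear_combination (1-4*th)^2 * d
    + (6*(Nop (Nop uu))*(1-th)^5*(1-4*th)^5 + 16*(Nop (Nop uu))*(1-th)^6*(1-4*th)^4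
        + (3 - 46*th - 48*th^2 + 1920*th^3 - 5120*th^4 + 1536*th^5)*(1-4*th)) * hev
    + (6*th*(1-4*th) + 16*th*(1-th)) * h2

lemma h4 : Nop (Nop (Nop (Nop uu))) * (1 - th)^6 * (1 - 4*th)^8
    = 3*th + 85*th^2 - 1328*th^3 + 3496*th^4 + 22432*th^5 - 141440*th^6 + 232960*th^7
      + 40960*th^8 - 327680*th^9 + 65536*th^10 := by
  have d := congrArg Nop h3
  simp only [Nop_mul, Nop_pow, Nop_sub, Nop_add, Nop_one, Nop_ofNat, Nop_X, Nat.cast_ofNat] at d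
  linear_combination (1-4*th)^2 * d
    + (6*(Nop (Nop (Nop uu)))*(1-th)^5*(1-4*th)^7 + 24*(Nop (Nop (Nop uu)))*(1-th)^6*(1-4*th)^6
        + (3 + 10*th - 1296*th^2 + 10176*th^3 - 18560*th^4 - 41472*th^5 + 129024*th^6 - 32768*th^7)*(1-4*th)) * hev
    + (6*th*(1-4*th) + 24*th*(1-th)) * h3

end
end TutteAux

namespace TutteAux
noncomputable section
open PowerSeries

lemma bigE :
    120*uu + 342*Nop uu + 357*Nop (Nop uu) + 162*Nop (Nop (Nop uu)) + 27*Nop (Nop (Nop (Nop uu)))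
      = X*(3024*uu + 6600*Nop uu + 5360*Nop (Nop uu) + 1920*Nop (Nop (Nop uu))
          + 256*Nop (Nop (Nop (Nop uu)))) + 120 := by
  apply cancel (m := (1-th)^6*(1-4*th)^8)
  · rw [map_mul, map_pow, map_pow, const_w, const_v, one_pow, one_pow, one_mul]; norm_num
  · linear_combination
      ((120:B) - 3024*X)*(1-4*th)^8 * hu
      + ((342:B) - 6600*X)*(1-4*th)^6 * h1
      + ((357:B) - 5360*X)*(1-4*th)^4 * h2
      + ((162:B) - 1920*X)*(1-4*th)^2 * h3
      + ((27:B) - 256*X) * h4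
      - (3024*(1 - 3*th + th^2)*(1-4*th)^8
        + 6600*(3*th - 25*th^2 + 56*th^3 - 16*th^4)*(1-4*th)^6
        + 5360*(3*th - 23*th^2 - 16*th^3 + 480*th^4 - 1024*th^5 + 256*th^6)*(1-4*th)^4
        + 1920*(3*th + 5*th^2 - 432*th^3 + 2544*th^4 - 3712*th^5 - 6912*th^6 + 18432*th^7 - 4096*th^8)*(1-4*th)^2
        + 256*(3*th + 85*th^2 - 1328*th^3 + 3496*th^4 + 22432*th^5 - 141440*th^6 + 232960*th^7
            + 40960*th^8 - 327680*th^9 + 65536*th^10)) * Stage1.hX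

@[simp] lemma coeff_numMul (n : ℕ) (m : ℕ) [m.AtLeastTwo] (F : B) :
    coeff (R := ℝ) n ((no_index (OfNat.ofNat m) : B) * F) = (OfNat.ofNat m : ℝ) * coeff (R := ℝ) n F := by
  rw [← map_ofNat (C (R := ℝ)) m, coeff_C_mul]

lemma coeff_num (n m : ℕ) [m.AtLeastTwo] :
    coeff (R := ℝ) n (no_index (OfNat.ofNat m) : B) = if n = 0 then (OfNat.ofNat m : ℝ) else 0 := by
  rw [← map_ofNat (C (R := ℝ)) m, coeff_C]

lemma u0 : coeff (R := ℝ) 0 uu = 1 := by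
  have h := congrArg (coeff (R := ℝ) 0) bigE
  simp only [map_add, coeff_numMul, coeff_Nop, coeff_zero_X_mul, coeff_num] at h
  norm_num at h
  rw [coeff_zero_eq_constantCoeff_apply]
  exact h

lemma u_rec (n : ℕ) :
    (120 + 342*((n:ℝ)+1) + 357*((n:ℝ)+1)^2 + 162*((n:ℝ)+1)^3 + 27*((n:ℝ)+1)^4)
        * coeff (R := ℝ) (n+1) uu
      = (3024 + 6600*(n:ℝ) + 5360*(n:ℝ)^2 + 1920*(n:ℝ)^3 + 256*(n:ℝ)^4) * coeff (R := ℝ) n uu := by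
  have h := congrArg (coeff (R := ℝ) (n+1)) bigE
  simp only [map_add, coeff_numMul, coeff_Nop, coeff_succ_X_mul, coeff_num] at h
  push_cast at h
  linarith [h]

/-- The Tutte coefficient. -/
def T (m : ℕ) : ℝ :=
  2 * (Nat.factorial (4 * m + 1) : ℝ) /
    ((Nat.factorial (m + 1) : ℝ) * (Nat.factorial (3 * m + 2) : ℝ))

lemma coeff_uu (n : ℕ) : coeff (R := ℝ) n uu = T (n+1) := by
  induction n with
  | zero =>
    rw [u0, T]
    norm_num [Nat.factorial]
  | succ n ih =>
    have h := u_rec n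
    rw [ih] at h
    have hA : (120 + 342*((n:ℝ)+1) + 357*((n:ℝ)+1)^2 + 162*((n:ℝ)+1)^3 + 27*((n:ℝ)+1)^4) ≠ 0 := by
      positivity
    have goal : (120 + 342*((n:ℝ)+1) + 357*((n:ℝ)+1)^2 + 162*((n:ℝ)+1)^3 + 27*((n:ℝ)+1)^4)
        * T (n+1+1)
        = (3024 + 6600*(n:ℝ) + 5360*(n:ℝ)^2 + 1920*(n:ℝ)^3 + 256*(n:ℝ)^4) * T (n+1) := by
      rw [T, T]
      rw [show 4*(n+1+1)+1 = 4*n+9 by ring, show (n+1+1)+1 = n+3 by ring,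
          show 3*(n+1+1)+2 = 3*n+8 by ring, show 4*(n+1)+1 = 4*n+5 by ring,
          show (n+1)+1 = n+2 by ring, show 3*(n+1)+2 = 3*n+5 by ring]
      have E9 : Nat.factorial (4*n+9) = (4*n+9)*((4*n+8)*((4*n+7)*((4*n+6)*Nat.factorial (4*n+5)))) := by
        rw [show 4*n+9 = (4*n+8)+1 by omega, Nat.factorial_succ,
            show 4*n+8 = (4*n+7)+1 by omega, Nat.factorial_succ,
            show 4*n+7 = (4*n+6)+1 by omega, Nat.factorial_succ,
            show 4*n+6 = (4*n+5)+1 by omega, Nat.factorial_succ]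
      have E3 : Nat.factorial (n+3) = (n+3)*Nat.factorial (n+2) := by
        rw [show n+3 = (n+2)+1 by omega, Nat.factorial_succ]
      have E8 : Nat.factorial (3*n+8) = (3*n+8)*((3*n+7)*((3*n+6)*Nat.factorial (3*n+5))) := by
        rw [show 3*n+8 = (3*n+7)+1 by omega, Nat.factorial_succ,
            show 3*n+7 = (3*n+6)+1 by omega, Nat.factorial_succ,
            show 3*n+6 = (3*n+5)+1 by omega, Nat.factorial_succ]
      rw [E9, E3, E8]
      have f1 : ((Nat.factorial (4*n+5) : ℝ)) ≠ 0 := Nat.cast_ne_zero.2 (Nat.factorial_ne_zero _)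
      have f2 : ((Nat.factorial (n+2) : ℝ)) ≠ 0 := Nat.cast_ne_zero.2 (Nat.factorial_ne_zero _)
      have f3 : ((Nat.factorial (3*n+5) : ℝ)) ≠ 0 := Nat.cast_ne_zero.2 (Nat.factorial_ne_zero _)
      push_cast
      field_simp
      ring
    exact mul_left_cancel₀ hA (h.trans goal.symm)

end
end TutteAux

namespace TutteAux
noncomputable section
open PowerSeries

/-- Tutte's series in `ℝ⟦X⟧`. -/
def t0 : B := PowerSeries.mk fun i => if i = 0 then 0 else T i

lemma t0_eq : t0 = X * uu := by
  ext m
  cases m with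
  | zero => simp [t0, coeff_zero_X_mul]
  | succ m => rw [t0, coeff_mk, if_neg (Nat.succ_ne_zero m), coeff_succ_X_mul, coeff_uu]

lemma htau : t0 * (1-th)^3 = th * (1 - 3*th + th^2) := by
  apply cancel (m := (1-th)^3)
  · rw [map_pow, const_w, one_pow]; norm_num
  · linear_combination (1-th)^6 * t0_eq + X * hu + (1 - 3*th + th^2) * Stage1.hX

end
end TutteAux

namespace TutteAux
noncomputable section
open PowerSeries

abbrev A' := PowerSeries (PowerSeries ℝ)

/-- degree (in the inner variable s) at most `d`. -/
def degLE (f : PowerSeries ℝ) (d : ℕ) : Prop := ∀ i, d < i → coeff (R := ℝ) i f = 0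

lemma degLE_mono {f : PowerSeries ℝ} {d e : ℕ} (h : degLE f d) (hde : d ≤ e) : degLE f e :=
  fun i hi => h i (lt_of_le_of_lt hde hi)

lemma degLE_mul {f g : PowerSeries ℝ} {d e : ℕ} (hf : degLE f d) (hg : degLE g e) :
    degLE (f * g) (d + e) := by
  intro i hi
  rw [coeff_mul]
  apply Finset.sum_eq_zero
  rintro ⟨a, c⟩ hm
  rw [Finset.HasAntidiagonal.mem_antidiagonal] at hm
  rcases lt_or_ge d a with h' | h'
  · rw [hf a h', zero_mul]
  · rw [hg c (by omega), mul_zero]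

lemma degLE_one (d : ℕ) : degLE 1 d := by
  intro i hi
  rw [coeff_one, if_neg (by omega)]

lemma degLE_C (x : ℝ) (d : ℕ) : degLE (C (R := ℝ) x) d := by
  intro i hi
  rw [coeff_C, if_neg (by omega)]

lemma degLE_X : degLE X 1 := by
  intro i hi
  rw [coeff_X, if_neg (by omega)]

lemma degLE_neg {f : PowerSeries ℝ} {d : ℕ} (h : degLE f d) : degLE (-f) d := by
  intro i hi; rw [map_neg, h i hi, neg_zero]

lemma degLE_add {f g : PowerSeries ℝ} {d : ℕ} (hf : degLE f d) (hg : degLE g d) :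
    degLE (f + g) d := by
  intro i hi; rw [map_add, hf i hi, hg i hi, add_zero]

/-- coefficients of the square root, by recursion. -/
noncomputable def sqc (U : A') : ℕ → PowerSeries ℝ
  | 0 => 1
  | n+1 => (C (R := ℝ) (2⁻¹ : ℝ)) * (coeff (R := PowerSeries ℝ) (n+1) U
      - ∑ k ∈ (Finset.Ico 1 (n+1)).attach, sqc U k.1 * sqc U (n+1-k.1))
  decreasing_by
    all_goals (have := k.2; rw [Finset.mem_Ico] at this; omega)

noncomputable def sqrtS (U : A') : A' := PowerSeries.mk (sqc U)

lemma sqc_zero (U : A') : sqc U 0 = 1 := by rw [sqc]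

lemma sqrtS_mul_self (U : A') (hU : coeff (R := PowerSeries ℝ) 0 U = 1) :
    sqrtS U * sqrtS U = U := by
  refine PowerSeries.ext fun n => ?_
  cases n with
  | zero =>
    rw [coeff_mul, Finset.Nat.antidiagonal_zero, Finset.sum_singleton]
    simp [sqrtS, sqc_zero, hU]
  | succ n =>
    rw [coeff_mul, Finset.Nat.sum_antidiagonal_eq_sum_range_succ_mk]
    rw [Finset.sum_range_succ, Finset.sum_range_succ']
    simp only [sqrtS, coeff_mk, Nat.sub_self, Nat.sub_zero, sqc_zero, mul_one, one_mul]
    have hIco : ∑ i ∈ Finset.range n, sqc U (i+1) * sqc U (n+1-(i+1))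
        = ∑ k ∈ (Finset.Ico 1 (n+1)).attach, sqc U k.1 * sqc U (n+1-k.1) := by
      rw [Finset.sum_attach (Finset.Ico 1 (n+1)) (fun k => sqc U k * sqc U (n+1-k))]
      rw [Finset.sum_Ico_eq_sum_range]
      simp only [Nat.add_sub_cancel]
      refine Finset.sum_congr rfl fun i _ => ?_
      rw [add_comm 1 i]
    rw [hIco]
    rw [sqc]
    have h2 : (2 : PowerSeries ℝ) * C (R := ℝ) (2⁻¹:ℝ) = 1 := by
      rw [← map_ofNat (C (R := ℝ)) 2, ← map_mul]
      norm_num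
    linear_combination (coeff (R := PowerSeries ℝ) (n+1) U
      - ∑ k ∈ (Finset.Ico 1 (n+1)).attach, sqc U k.1 * sqc U (n+1-k.1)) * h2

end
end TutteAux

namespace TutteAux
noncomputable section
open PowerSeries

lemma degLE_sum {ι : Type*} {s : Finset ι} {f : ι → PowerSeries ℝ} {d : ℕ}
    (h : ∀ x ∈ s, degLE (f x) d) : degLE (∑ x ∈ s, f x) d := by
  intro i hi
  rw [map_sum]
  exact Finset.sum_eq_zero fun x hx => h x hx i hi

lemma sqc_deg (U : A') (hU : ∀ n, 1 ≤ n → degLE (coeff (R := PowerSeries ℝ) n U) (n-1)) :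
    ∀ n, 1 ≤ n → degLE (sqc U n) (n-1) := by
  intro n
  induction n using Nat.strong_induction_on with
  | _ n ih =>
    intro hn
    match n, hn with
    | (m+1), _ =>
      rw [sqc]
      have h1 : degLE (coeff (R := PowerSeries ℝ) (m+1) U
          - ∑ k ∈ (Finset.Ico 1 (m+1)).attach, sqc U k.1 * sqc U (m+1-k.1)) (m+1-1) := by
        rw [sub_eq_add_neg]
        refine degLE_add (hU (m+1) (by omega)) (degLE_neg (degLE_sum ?_))
        rintro ⟨k, hk⟩ _
        rw [Finset.mem_Ico] at hk
        have e1 : degLE (sqc U k) (k-1) := ih k (by omega) (by omega)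
        have e2 : degLE (sqc U (m+1-k)) (m+1-k-1) := ih (m+1-k) (by omega) (by omega)
        exact degLE_mono (degLE_mul e1 e2) (by omega)
      have := degLE_mul (degLE_C (2⁻¹ : ℝ) 0) h1
      simpa using this

noncomputable abbrev M' : B →+* A' := PowerSeries.map (C (R := ℝ))

noncomputable def TH : A' := M' th

lemma hLam : (X : A') = TH * (1 - TH)^3 := by
  have h := congrArg M' Stage1.hX
  rw [map_mul, map_pow, map_sub, map_one, PowerSeries.map_X] at h
  rw [TH]
  exact h

lemma hTau' : tutteSeries = M' t0 := by
  refine PowerSeries.ext fun i => ?_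
  rw [coeff_map]
  simp only [tutteSeries, t0, coeff_mk]
  by_cases h : i = 0
  · simp [h]
  · simp only [h, if_false, T]

lemma hTau3 : tutteSeries * (1 - TH)^3 = TH * (1 - 3*TH + TH^2) := by
  rw [hTau', TH]
  have h := congrArg M' htau
  simp only [map_mul, map_pow, map_sub, map_add, map_one, map_ofNat] at h
  exact h

noncomputable def WI : A' := M' ((1 - th)⁻¹)

lemma hWI : (1 - TH) * WI = 1 := by
  have h0 : (1 - th) * (1 - th)⁻¹ = 1 :=
    PowerSeries.mul_inv_cancel _ (by rw [const_w]; norm_num)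
  have h := congrArg M' h0
  rw [map_mul, map_sub, map_one] at h
  rw [TH, WI]
  exact h

/-- the constant-constant coefficient, as a ring hom. -/
noncomputable def cc2 : A' →+* ℝ := (constantCoeff (R := ℝ)).comp (constantCoeff (R := PowerSeries ℝ))

lemma ccM (f : B) :
    constantCoeff (R := PowerSeries ℝ) (M' f) = C (R := ℝ) (constantCoeff (R := ℝ) f) := by
  rw [← coeff_zero_eq_constantCoeff_apply, ← coeff_zero_eq_constantCoeff_apply, coeff_map]

lemma cc2_TH : cc2 TH = 0 := by
  rw [cc2, RingHom.comp_apply, TH, ccM, constantCoeff_C, th_const]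

lemma cc2_X : cc2 (X : A') = 0 := by
  simp only [cc2, RingHom.comp_apply, constantCoeff_X, map_zero]

lemma cc2_sVar : cc2 sVar = 0 := by
  simp only [cc2, RingHom.comp_apply, sVar, constantCoeff_C, constantCoeff_X]

lemma cc2_sqrtS (U : A') : cc2 (sqrtS U) = 1 := by
  have h : coeff (R := PowerSeries ℝ) 0 (sqrtS U) = 1 := by rw [sqrtS, coeff_mk, sqc_zero]
  calc cc2 (sqrtS U) = constantCoeff (R := ℝ) (coeff (R := PowerSeries ℝ) 0 (sqrtS U)) := by
        simp only [cc2, RingHom.comp_apply, coeff_zero_eq_constantCoeff_apply]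
    _ = 1 := by rw [h, map_one]

end
end TutteAux

namespace TutteAux
noncomputable section
open PowerSeries

lemma degLE_zero (d : ℕ) : degLE 0 d := fun i _ => by rw [map_zero]

lemma degLE_4X : degLE ((4 : PowerSeries ℝ)*X) 1 := by
  intro i hi
  rw [← map_ofNat (C (R := ℝ)) 4, coeff_C_mul, coeff_X, if_neg (by omega), mul_zero]

/-- the element whose square root we take. -/
noncomputable def UUe : A' := (1 - 2*TH)^2*(1 - TH)^2 - 4*X^2*sVar

lemma hUUm : (1 - 2*TH)^2*(1 - TH)^2 = M' ((1 - 2*th)^2*(1 - th)^2) := by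
  rw [TH]
  simp only [map_mul, map_pow, map_sub, map_one, map_ofNat]

lemma hUUs : (4 : A')*X^2*sVar = X*(X*(C (R := PowerSeries ℝ) ((4 : PowerSeries ℝ)*X))) := by
  have h4 : (C (R := PowerSeries ℝ)) ((4 : PowerSeries ℝ)*X) = 4*sVar := by
    rw [map_mul, map_ofNat]
    rfl
  rw [h4]; ring

lemma hUU0 : coeff (R := PowerSeries ℝ) 0 UUe = 1 := by
  rw [UUe, map_sub, hUUm, coeff_map]
  have h2 : coeff (R := ℝ) 0 ((1 - 2*th)^2*(1 - th)^2) = 1 := by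
    rw [coeff_zero_eq_constantCoeff_apply]
    simp [th_const]
  rw [h2, map_one, hUUs, coeff_zero_X_mul, sub_zero]

lemma hUUdeg : ∀ n, 1 ≤ n → degLE (coeff (R := PowerSeries ℝ) n UUe) (n-1) := by
  intro n hn
  rw [UUe, map_sub, hUUm, coeff_map, hUUs]
  refine degLE_add ?_ (degLE_neg ?_)
  · exact degLE_mono (degLE_C _ 0) (by omega)
  · match n, hn with
    | 1, _ =>
      rw [coeff_succ_X_mul, coeff_zero_X_mul]
      exact degLE_zero _
    | (m+2), _ =>
      rw [coeff_succ_X_mul, coeff_succ_X_mul, coeff_C]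
      rcases eq_or_ne m 0 with h | h
      · subst h
        rw [if_pos rfl]
        exact degLE_mono degLE_4X (by omega)
      · rw [if_neg h]
        exact degLE_zero _

lemma hS2 : sqrtS UUe * sqrtS UUe = UUe := sqrtS_mul_self UUe hUU0

lemma hSdegAll : ∀ n, degLE (coeff (R := PowerSeries ℝ) n (sqrtS UUe)) n := by
  intro n
  rw [sqrtS, coeff_mk]
  cases n with
  | zero => rw [sqc_zero]; exact degLE_one 0
  | succ m =>
    exact degLE_mono (sqc_deg UUe hUUdeg (m+1) (by omega)) (by omega)

lemma degLE_coeff_M_mul (β : B) (Z : A') (hZ : ∀ n, degLE (coeff (R := PowerSeries ℝ) n Z) n)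
    (j : ℕ) : degLE (coeff (R := PowerSeries ℝ) j (M' β * Z)) j := by
  rw [coeff_mul]
  apply degLE_sum
  rintro ⟨a, c⟩ hm
  rw [Finset.HasAntidiagonal.mem_antidiagonal] at hm
  rw [coeff_map]
  exact degLE_mono (degLE_mul (degLE_C _ 0) (hZ c)) (by omega)

lemma cc2_lVar : cc2 lVar = 0 := cc2_X

end
end TutteAux


namespace TutteAux
open PowerSeries

theorem main
    (inv r g b : PowerSeries (PowerSeries ℝ))
    (hinv : (1 + lVar * sVar) * inv = 1)
    (hr : r = sVar * inv + tutteSeries)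
    (hg1 : PowerSeries.constantCoeff (R := ℝ)
      (PowerSeries.constantCoeff (R := PowerSeries ℝ) g) = 1)
    (hg2 : g ^ 2 = (1 + r) ^ 2 - 4 * sVar)
    (hb : b = sVar + (1 + lVar * sVar) * g) :
    ∀ i j : ℕ,
      PowerSeries.coeff (R := ℝ) i (PowerSeries.coeff (R := PowerSeries ℝ) j b) ≠ 0 → i ≤ j := by
  have hlv : lVar = (X : A') := rfl
  have hg1' : cc2 g = 1 := hg1
  -- step 1: the quadratic equation for (1+λs)g
  have hh : (1 + lVar*sVar)*(1+r) = (1 + lVar*sVar)*(1+tutteSeries) + sVar := by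
    linear_combination (1 + lVar*sVar)*hr + sVar*hinv
  have hD : ((1 + lVar*sVar)*g)^2
      = ((1 + lVar*sVar)*(1+tutteSeries) + sVar)^2 - 4*sVar*(1 + lVar*sVar)^2 := by
    have h0 : ((1 + lVar*sVar)*g)^2 = (1 + lVar*sVar)^2*((1+r)^2 - 4*sVar) := by
      rw [mul_pow, hg2]
    rw [h0]
    linear_combination ((1 + lVar*sVar)*(1+r) + ((1 + lVar*sVar)*(1+tutteSeries) + sVar))*hh
  -- step 2: eliminate tutteSeries and λ using the parametrization
  have tElim : (1-TH)^3*((1 + lVar*sVar)*(1+tutteSeries) + sVar)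
      = (1-2*TH)*(1 + lVar*sVar) + (1-TH)^3*sVar := by
    linear_combination (1 + lVar*sVar)*hTau3
  have C1 : (1-TH)^2*((1-2*TH)*(1 + lVar*sVar) + (1-TH)^3*sVar)^2
        - 4*sVar*(1-TH)^8*(1 + lVar*sVar)^2
      = (1-(1-TH)^4*sVar)^2 * UUe := by
    rw [UUe, hlv, hLam]
    ring
  have KEY : (1-TH)^8*(((1 + lVar*sVar)*(1+tutteSeries) + sVar)^2 - 4*sVar*(1 + lVar*sVar)^2)
      = (1-(1-TH)^4*sVar)^2 * UUe := by
    linear_combination ((1-TH)^2*((1-TH)^3*((1 + lVar*sVar)*(1+tutteSeries) + sVar)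
      + ((1-2*TH)*(1 + lVar*sVar) + (1-TH)^3*sVar)))*tElim + C1
  -- step 3: identify the square root
  have E2 : ((1-TH)^4*((1 + lVar*sVar)*g))^2 = ((1 - (1-TH)^4*sVar)*(sqrtS UUe))^2 := by
    rw [mul_pow ((1-TH)^4) ((1 + lVar*sVar)*g), hD]
    linear_combination KEY - (1-(1-TH)^4*sVar)^2*hS2
  have hzero : ((1-TH)^4*((1 + lVar*sVar)*g) - (1 - (1-TH)^4*sVar)*(sqrtS UUe))
      * ((1-TH)^4*((1 + lVar*sVar)*g) + (1 - (1-TH)^4*sVar)*(sqrtS UUe)) = 0 := by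
    linear_combination E2
  have hsign : (1-TH)^4*((1 + lVar*sVar)*g) = (1 - (1-TH)^4*sVar)*(sqrtS UUe) := by
    rcases mul_eq_zero.mp hzero with h' | h'
    · exact sub_eq_zero.mp h'
    · exfalso
      have hcc := congrArg cc2 h'
      simp only [map_add, map_mul, map_pow, map_sub, map_one, cc2_TH, cc2_lVar, cc2_sVar,
        cc2_sqrtS, hg1', map_zero] at hcc
      norm_num at hcc
  -- step 4: the closed form of b
  have hfinal : b = WI^4*(sqrtS UUe) + sVar*(1 - sqrtS UUe) := by
    linear_combination hb + WI^4*hsign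
      - ((1 + lVar*sVar)*g + sVar*(sqrtS UUe))
        * (((1-TH)*WI)^3 + ((1-TH)*WI)^2 + (1-TH)*WI + 1) * hWI
  -- step 5: degree bounds
  intro i j hne
  by_contra hij
  push_neg at hij
  have hbj : degLE (coeff (R := PowerSeries ℝ) j b) j := by
    rw [hfinal, map_add]
    refine degLE_add ?_ ?_
    · rw [WI, ← map_pow]
      exact degLE_coeff_M_mul _ _ hSdegAll j
    · rw [show sVar = C (R := PowerSeries ℝ) X from rfl, coeff_C_mul]
      cases j with
      | zero =>
        rw [show coeff (R := PowerSeries ℝ) 0 (1 - sqrtS UUe) = 0 from ?_]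
        · rw [mul_zero]; exact degLE_zero _
        · have h0 : coeff (R := PowerSeries ℝ) 0 (sqrtS UUe) = 1 := by
            rw [sqrtS, coeff_mk, sqc_zero]
          rw [map_sub, h0, coeff_one, if_pos rfl, sub_self]
      | succ m =>
        rw [map_sub, coeff_one, if_neg (Nat.succ_ne_zero m), zero_sub]
        have hs : degLE (coeff (R := PowerSeries ℝ) (m+1) (sqrtS UUe)) m := by
          rw [sqrtS, coeff_mk]
          exact degLE_mono (sqc_deg UUe hUUdeg (m+1) (by omega)) (by omega)
        exact degLE_mono (degLE_mul degLE_X (degLE_neg hs)) (by omega)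
  exact hne (hbj i (by omega))

end TutteAux

/-- With `r = s·(1+λs)⁻¹ + τ(λ)`, `g` the unique square root of
`(1+r)² − 4s` with constant coefficient `1`, and `b = s + (1+λs)·g`, the series `b` is of
degree `≤ 0`: every monomial `sⁱλʲ` occurring in `b` satisfies `i ≤ j`. -/
theorem b_series_deg_nonpos
    (inv r g b : PowerSeries (PowerSeries ℝ))
    (hinv : (1 + lVar * sVar) * inv = 1)
    (hr : r = sVar * inv + tutteSeries)
    (hg1 : PowerSeries.constantCoeff (R := ℝ)
      (PowerSeries.constantCoeff (R := PowerSeries ℝ) g) = 1)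
    (hg2 : g ^ 2 = (1 + r) ^ 2 - 4 * sVar)
    (hb : b = sVar + (1 + lVar * sVar) * g) :
    ∀ i j : ℕ,
      PowerSeries.coeff (R := ℝ) i (PowerSeries.coeff (R := PowerSeries ℝ) j b) ≠ 0 → i ≤ j :=
  TutteAux.main inv r g b hinv hr hg1 hg2 hb
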